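/- For every integer k ≥ 2 and every sufficiently large n, every edge-coloring of K^{(k)}_{n,…,n} using at most ⌊n/2⌋ colors contains a copy of K_{1,…,1,2,2} with no odd color class; consequently r_odd(K^{(k)}_{n,…,n}, K_{1,…,1,2,2}) > n/2. -/

import Mathlib

open Finset

/-- An edge of the complete `k`-partite `k`-uniform hypergraph `K^{(k)}_{n,…,n}` is a
transversal, i.e. a choice of one vertex from each of the `k` parts; we encode it as a
function `Fin k → Fin n`. A copy of `K_{1,…,1,2,2}` is determined by two distinct special
parts `p ≠ q`, a base transversal `f`, and second choices `a ≠ f p`, `b ≠ f q` in parts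
`p` and `q`; its edge set consists of the four resulting transversals. -/
def isCopy1122 (n k : ℕ) (E : Finset (Fin k → Fin n)) : Prop :=
  ∃ p q : Fin k, p ≠ q ∧ ∃ (f : Fin k → Fin n) (a b : Fin n), f p ≠ a ∧ f q ≠ b ∧
    E = {f, Function.update f p a, Function.update f q b,
         Function.update (Function.update f p a) q b}

/-- Under an edge-coloring `c`, the copy with edge set `E` has an odd color class. -/
def hasOddColorClass {α : Type*} [DecidableEq α] {N : ℕ} (c : α → Fin N)
    (E : Finset α) : Prop :=
  ∃ i : Fin N, Odd (E.filter fun e => c e = i).card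

/-- The odd Ramsey number `r_odd(K^{(k)}_{n,…,n}, K_{1,…,1,2,2})`. -/
noncomputable def oddRamseyHyp (n k : ℕ) : ℕ :=
  sInf {N : ℕ | ∃ c : (Fin k → Fin n) → Fin N,
    ∀ E : Finset (Fin k → Fin n), isCopy1122 n k E → hasOddColorClass c E}


lemma fibersum (n N : ℕ) (g : Fin n → Fin N) :
    ∑ i : Fin N, ((univ.filter fun y => g y = i).card) = n := by
  rw [← Finset.card_eq_sum_card_fiberwise (fun x _ => mem_univ (g x))]
  simp

lemma monocard (n N : ℕ) (hN0 : 0 < N) (hN : 2 * N ≤ n) (g : Fin n → Fin N) :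
    2 * n ≤ ((univ : Finset (Fin n × Fin n)).filter fun p => g p.1 = g p.2).card := by
  have hdecomp : ((univ : Finset (Fin n × Fin n)).filter fun p => g p.1 = g p.2)
      = (univ : Finset (Fin N)).biUnion
        (fun i => (univ.filter fun y => g y = i) ×ˢ (univ.filter fun y => g y = i)) := by
    ext ⟨y, b⟩
    simp [Finset.mem_biUnion, Finset.mem_product]
    aesop
  have hdisj : ∀ i ∈ (univ : Finset (Fin N)), ∀ j ∈ univ, i ≠ j →
      Disjoint ((univ.filter fun y => g y = i) ×ˢ (univ.filter fun y => g y = i))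
        ((univ.filter fun y => g y = j) ×ˢ (univ.filter fun y => g y = j)) := by
    intro i _ j _ hij
    rw [Finset.disjoint_left]
    rintro ⟨y, b⟩ h1 h2
    simp [Finset.mem_product] at h1 h2
    exact hij (h1.1 ▸ h2.1 ▸ rfl)
  rw [hdecomp, Finset.card_biUnion hdisj]
  simp_rw [Finset.card_product]
  -- Cauchy-Schwarz over ℤ
  set s : Fin N → ℕ := fun i => (univ.filter fun y => g y = i).card with hs
  have hsum : ∑ i : Fin N, s i = n := fibersum n N g
  have hcs : ((n : ℤ))^2 ≤ (N : ℤ) * ∑ i : Fin N, (s i : ℤ)^2 := by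
    have := sq_sum_le_card_mul_sum_sq (s := (univ : Finset (Fin N))) (f := fun i => (s i : ℤ))
    simpa [← Nat.cast_sum, hsum] using this
  have hcs' : n * n ≤ N * ∑ i : Fin N, s i * s i := by
    have : ((n * n : ℕ) : ℤ) ≤ ((N * ∑ i : Fin N, s i * s i : ℕ) : ℤ) := by
      push_cast
      calc ((n:ℤ) * n) = (n:ℤ)^2 := by ring
        _ ≤ (N : ℤ) * ∑ i : Fin N, (s i : ℤ)^2 := hcs
        _ = (N:ℤ) * ∑ i : Fin N, (s i:ℤ) * (s i:ℤ) := by simp [sq]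
    exact_mod_cast this
  have : N * (2 * n) ≤ N * ∑ i : Fin N, s i * s i :=
    le_trans (by nlinarith) hcs'
  exact Nat.le_of_mul_le_mul_left this hN0

lemma diagcard (n : ℕ) :
    ((univ : Finset (Fin n × Fin n)).filter fun p => p.1 = p.2).card = n := by
  have : ((univ : Finset (Fin n × Fin n)).filter fun p => p.1 = p.2)
      = (univ : Finset (Fin n)).image (fun y => (y, y)) := by
    ext ⟨y, b⟩
    aesop
  rw [this, Finset.card_image_of_injective _ (fun a b h => congrArg Prod.fst h)]
  simp

lemma rowcard (n N : ℕ) (hN0 : 0 < N) (hN : 2 * N ≤ n) (g : Fin n → Fin N) :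
    n ≤ ((univ : Finset (Fin n × Fin n)).filter fun p => p.1 ≠ p.2 ∧ g p.1 = g p.2).card := by
  have hmono := monocard n N hN0 hN g
  have hsplit := Finset.card_filter_add_card_filter_not
    (s := (univ : Finset (Fin n × Fin n)).filter fun p => g p.1 = g p.2)
    (p := fun p => p.1 = p.2)
  have h1 : (((univ : Finset (Fin n × Fin n)).filter fun p => g p.1 = g p.2).filter
      fun p => p.1 = p.2) = ((univ : Finset (Fin n × Fin n)).filter fun p => p.1 = p.2) := by
    ext ⟨y, b⟩; simp; aesop
  have h2 : (((univ : Finset (Fin n × Fin n)).filter fun p => g p.1 = g p.2).filter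
      fun p => ¬ p.1 = p.2) = ((univ : Finset (Fin n × Fin n)).filter
        fun p => p.1 ≠ p.2 ∧ g p.1 = g p.2) := by
    ext ⟨y, b⟩; simp; tauto
  rw [h1, h2, diagcard] at hsplit
  omega

lemma core (n N : ℕ) (hn : 1 ≤ n) (hN0 : 0 < N) (hN : N ≤ n / 2)
    (c' : Fin n → Fin n → Fin N) :
    ∃ x a y b : Fin n, x ≠ a ∧ y ≠ b ∧ c' x y = c' x b ∧ c' a y = c' a b := by
  have h2N : 2 * N ≤ n := by omega
  set S : Finset (Fin n × Fin n × Fin n) :=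
    univ.filter (fun t => t.2.1 ≠ t.2.2 ∧ c' t.1 t.2.1 = c' t.1 t.2.2) with hS
  set D : Finset (Fin n × Fin n) := univ.filter (fun p => p.1 ≠ p.2) with hD
  have hDcard : D.card = n * n - n := by
    have hsplit := Finset.card_filter_add_card_filter_not
      (s := (univ : Finset (Fin n × Fin n))) (p := fun p => p.1 = p.2)
    rw [diagcard] at hsplit
    have huniv : (univ : Finset (Fin n × Fin n)).card = n * n := by simp
    have : D = (univ : Finset (Fin n × Fin n)).filter fun p => ¬ p.1 = p.2 := rfl
    rw [this]
    omega
  -- lower bound on S.card via rows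
  have hScard : n * n ≤ S.card := by
    have hfib : S.card = ∑ x : Fin n, (S.filter fun t => t.1 = x).card :=
      Finset.card_eq_sum_card_fiberwise (fun t _ => mem_univ t.1)
    have hrow : ∀ x : Fin n, (S.filter fun t => t.1 = x)
        = ((univ : Finset (Fin n × Fin n)).filter
            fun p => p.1 ≠ p.2 ∧ c' x p.1 = c' x p.2).map
          ⟨fun p => (x, p), Prod.mk_right_injective x⟩ := by
      intro x
      ext ⟨x', y, b⟩
      simp [hS]
      aesop
    rw [hfib]
    calc n * n = ∑ _x : Fin n, n := by simp [mul_comm]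
      _ ≤ ∑ x : Fin n, (S.filter fun t => t.1 = x).card := by
          apply Finset.sum_le_sum
          intro x _
          rw [hrow x, Finset.card_map]
          exact rowcard n N hN0 h2N (c' x)
  -- upper bound via columns if all fibers small
  have hfib2 : S.card = ∑ p ∈ D, (S.filter fun t => t.2 = p).card := by
    apply Finset.card_eq_sum_card_fiberwise
    intro t ht
    simp [hS] at ht
    simp [hD, ht.1]
  by_contra hcon
  push_neg at hcon
  have hsmall : ∀ p ∈ D, (S.filter fun t => t.2 = p).card ≤ 1 := by
    intro p hp
    by_contra hbig
    push_neg at hbig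
    obtain ⟨⟨x1, r1⟩, ht1, ⟨x2, r2⟩, ht2, hne⟩ := Finset.one_lt_card.mp hbig
    simp [hS] at ht1 ht2
    obtain ⟨⟨hyb1, hc1⟩, hp1⟩ := ht1
    obtain ⟨⟨hyb2, hc2⟩, hp2⟩ := ht2
    subst hp1
    subst hp2
    have hx : x1 ≠ x2 := fun h => hne (by simp [h])
    exact hcon x1 x2 r2.1 r2.2 hx hyb2 hc1 hc2
  have hle : S.card ≤ D.card := by
    rw [hfib2]
    calc ∑ p ∈ D, (S.filter fun t => t.2 = p).card ≤ ∑ _p ∈ D, 1 :=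
          Finset.sum_le_sum hsmall
      _ = D.card := by simp
  rw [hDcard] at hle
  have h3 : n * n - n < n * n := Nat.sub_lt (by positivity) hn
  exact absurd (hScard.trans hle) (Nat.not_le.mpr h3)

section Main

variable {n k : ℕ}

lemma stmt4_part1 (k : ℕ) (hk : 2 ≤ k) (n : ℕ) (hn : 1 ≤ n)
    (N : ℕ) (hN : N ≤ n / 2) (c : (Fin k → Fin n) → Fin N) :
    ∃ E : Finset (Fin k → Fin n), isCopy1122 n k E ∧ ¬ hasOddColorClass c E := by
  rcases Nat.eq_zero_or_pos N with h0 | hN0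
  · subst h0
    exact ((c fun _ => ⟨0, hn⟩)).elim0
  set p : Fin k := ⟨0, by omega⟩ with hp
  set q : Fin k := ⟨1, hk⟩ with hq
  have hpq : p ≠ q := by simp [hp, hq, Fin.ext_iff]
  set e : Fin n → Fin n → (Fin k → Fin n) :=
    fun u v => Function.update (Function.update (fun _ : Fin k => ⟨0, hn⟩) p u) q v with he
  have hep : ∀ u v, e u v p = u := by
    intro u v
    simp [he, Function.update_of_ne hpq, Function.update_self]
  have heq : ∀ u v, e u v q = v := by
    intro u v
    simp [he, Function.update_self]
  have hinj : ∀ u v u' v', e u v = e u' v' → u = u' ∧ v = v' := by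
    intro u v u' v' h
    constructor
    · have := congrFun h p; rwa [hep, hep] at this
    · have := congrFun h q; rwa [heq, heq] at this
  have hupd_p : ∀ u v a', Function.update (e u v) p a' = e a' v := by
    intro u v a'
    simp only [he]
    rw [Function.update_comm hpq.symm, Function.update_idem]
  have hupd_q : ∀ u v b', Function.update (e u v) q b' = e u b' := by
    intro u v b'
    simp only [he]
    rw [Function.update_idem]
  obtain ⟨x, a, y, b, hxa, hyb, hc1, hc2⟩ :=
    core n N hn hN0 hN (fun u v => c (e u v))
  refine ⟨{e x y, e a y, e x b, e a b}, ⟨p, q, hpq, e x y, a, b, ?_, ?_, ?_⟩, ?_⟩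
  · rw [hep]; exact hxa
  · rw [heq]; exact hyb
  · rw [hupd_p, hupd_q, hupd_q]
  · rintro ⟨i, hodd⟩
    have d1 : e x y ≠ e a y := fun h => hxa (hinj _ _ _ _ h).1
    have d2 : e x y ≠ e x b := fun h => hyb (hinj _ _ _ _ h).2
    have d3 : e x y ≠ e a b := fun h => hxa (hinj _ _ _ _ h).1
    have d4 : e a y ≠ e x b := fun h => hxa (hinj _ _ _ _ h).1.symm
    have d5 : e a y ≠ e a b := fun h => hyb (hinj _ _ _ _ h).2
    have d6 : e x b ≠ e a b := fun h => hxa (hinj _ _ _ _ h).1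
    have hcard : (({e x y, e a y, e x b, e a b} : Finset (Fin k → Fin n)).filter
        fun e' => c e' = i).card
        = (if c (e x y) = i then 1 else 0) + ((if c (e a y) = i then 1 else 0)
          + ((if c (e x b) = i then 1 else 0) + (if c (e a b) = i then 1 else 0))) := by
      rw [Finset.card_filter]
      rw [Finset.sum_insert (by simp [d1, d2, d3]),
          Finset.sum_insert (by simp [d4, d5]),
          Finset.sum_insert (by simp [d6]),
          Finset.sum_singleton]
    rw [hcard, hc1, hc2] at hodd
    rcases Nat.odd_iff.mp hodd with h
    by_cases hA : c (e x b) = i <;> by_cases hB : c (e a b) = i <;>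
      simp [hA, hB] at h

lemma good_coloring (n k : ℕ) :
    (Fintype.card (Fin k → Fin n)) ∈ {N : ℕ | ∃ c : (Fin k → Fin n) → Fin N,
      ∀ E : Finset (Fin k → Fin n), isCopy1122 n k E → hasOddColorClass c E} := by
  refine ⟨Fintype.equivFin (Fin k → Fin n), ?_⟩
  rintro E ⟨p, q, hpq, f, a, b, hfa, hfb, hE⟩
  have hfE : f ∈ E := by rw [hE]; exact Finset.mem_insert_self _ _
  refine ⟨Fintype.equivFin (Fin k → Fin n) f, ?_⟩
  have : E.filter (fun e => Fintype.equivFin (Fin k → Fin n) e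
      = Fintype.equivFin (Fin k → Fin n) f) = {f} := by
    ext e'
    simp only [Finset.mem_filter, Finset.mem_singleton]
    constructor
    · rintro ⟨_, h⟩
      exact (Fintype.equivFin (Fin k → Fin n)).injective h
    · rintro rfl
      exact ⟨hfE, rfl⟩
  rw [this]
  simp


/-- For every `k ≥ 2` and every sufficiently large `n`, every edge-coloring of
`K^{(k)}_{n,…,n}` using at most `⌊n/2⌋` colors contains a copy of `K_{1,…,1,2,2}` with no
odd color class; consequently `r_odd(K^{(k)}_{n,…,n}, K_{1,…,1,2,2}) > n/2`. -/
theorem stmt4 (k : ℕ) (hk : 2 ≤ k) :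
    ∃ n₀ : ℕ, ∀ n : ℕ, n₀ ≤ n →
      (∀ N : ℕ, N ≤ n / 2 → ∀ c : (Fin k → Fin n) → Fin N,
        ∃ E : Finset (Fin k → Fin n), isCopy1122 n k E ∧ ¬ hasOddColorClass c E) ∧
      (n : ℝ) / 2 < (oddRamseyHyp n k : ℝ) := by
  refine ⟨1, fun n hn => ⟨fun N hN c => stmt4_part1 k hk n hn N hN c, ?_⟩⟩
  set Sset := {N : ℕ | ∃ c : (Fin k → Fin n) → Fin N,
    ∀ E : Finset (Fin k → Fin n), isCopy1122 n k E → hasOddColorClass c E} with hSset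
  have hne : Sset.Nonempty := ⟨_, good_coloring n k⟩
  have hmem : sInf Sset ∈ Sset := Nat.sInf_mem hne
  obtain ⟨c, hc⟩ := hmem
  have hgt : n / 2 < sInf Sset := by
    by_contra hle
    push_neg at hle
    obtain ⟨E, hcopy, hnodd⟩ := stmt4_part1 k hk n hn (sInf Sset) hle c
    exact hnodd (hc E hcopy)
  have hR : oddRamseyHyp n k = sInf Sset := rfl
  have hfin : n < 2 * oddRamseyHyp n k := by rw [hR]; omega
  rw [div_lt_iff₀ (by norm_num : (0:ℝ) < 2)]
  have : (n:ℝ) < ((2 * oddRamseyHyp n k : ℕ) : ℝ) := by exact_mod_cast hfin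
  push_cast at this
  linarith
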